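/- arXiv:2303.14819 — 2 statements merged into one kernel-verified Lean document; each statement's English description precedes it below -/
import Mathlib

section
/- Let K be a number field with ring of integers R, and let m_p ∈ ℕ≥1 be defined for each prime p of R. For m ≥ 2 define the ideal D(m) = ∏_{p : m_p ≤ m} p (a possibly infinite product, assumed finite). If log log N(D(m)) ≤ C log m for all m ≥ 2, then ∑_{p : m_p ≤ m} (log Np)/Np ≤ C' log m + C'' for constants C', C'' depending only on K and C. -/
open NumberField

open Finset in
lemma log_primorial_le (n : ℕ) :
    ∑ q ∈ Nat.primesBelow (n + 1), Real.log q ≤ n * Real.log 4 := by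
  have h0 : ∀ q ∈ Nat.primesBelow (n + 1), (q : ℝ) ≠ 0 := by
    intro q hq
    exact_mod_cast (Nat.mem_primesBelow.mp hq).2.pos.ne'
  have h1 : ∑ q ∈ Nat.primesBelow (n + 1), Real.log q = Real.log (primorial n) := by
    rw [← Real.log_prod h0, primorial, Nat.primesBelow]
    push_cast
    rfl
  rw [h1]
  calc Real.log (primorial n) ≤ Real.log ((4:ℝ) ^ n) := by
        apply Real.log_le_log (by exact_mod_cast primorial_pos n)
        exact_mod_cast primorial_le_4_pow n
    _ = n * Real.log 4 := by rw [Real.log_pow]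

lemma mertens_bound (n : ℕ) :
    ∑ q ∈ Nat.primesBelow (n + 1), Real.log q / q
      ≤ (2 * Real.log 4 / Real.log 2) * Real.log n + 2 * Real.log 4 := by
  set A : ℝ := 2 * Real.log 4 / Real.log 2 with hA
  have hlog2 : (0:ℝ) < Real.log 2 := Real.log_pos (by norm_num)
  have hlog4 : (0:ℝ) ≤ Real.log 4 := Real.log_nonneg (by norm_num)
  have hApos : 0 ≤ A := by positivity
  induction n using Nat.strong_induction_on with
  | _ n ih =>
    by_cases hn : n ≤ 1
    · have hempty : Nat.primesBelow (n + 1) = ∅ := by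
        ext q
        simp only [Nat.mem_primesBelow, Finset.notMem_empty, iff_false, not_and]
        intro hq hprime
        have := hprime.two_le
        omega
      rw [hempty, Finset.sum_empty]
      have : 0 ≤ Real.log n := Real.log_natCast_nonneg n
      nlinarith
    · push_neg at hn
      have hn2 : 2 ≤ n := hn
      set h := n / 2 with hh
      have hh1 : 1 ≤ h := by omega
      have hhn : h < n := by omega
      have h2h : 2 * h ≤ n := by omega
      have hn2h : n ≤ 2 * h + 1 := by omega
      have hsplit := Finset.sum_filter_add_sum_filter_not (Nat.primesBelow (n + 1))
        (fun q => q < h + 1) (fun q => Real.log q / q)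
      have hfilt : (Nat.primesBelow (n + 1)).filter (fun q => q < h + 1)
          = Nat.primesBelow (h + 1) := by
        ext q
        simp only [Finset.mem_filter, Nat.mem_primesBelow]
        constructor
        · rintro ⟨⟨_, hp⟩, hlt⟩; exact ⟨hlt, hp⟩
        · rintro ⟨hlt, hp⟩; exact ⟨⟨by omega, hp⟩, hlt⟩
      have hsecond : ∑ q ∈ (Nat.primesBelow (n + 1)).filter (fun q => ¬ q < h + 1),
          Real.log q / q ≤ 2 * Real.log 4 := by
        have hstep : ∀ q ∈ (Nat.primesBelow (n + 1)).filter (fun q => ¬ q < h + 1),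
            Real.log q / q ≤ 2 / n * Real.log q := by
          intro q hq
          rw [Finset.mem_filter, Nat.mem_primesBelow] at hq
          obtain ⟨⟨hqn, hqp⟩, hqh⟩ := hq
          have hq1 : (1:ℝ) ≤ q := by exact_mod_cast hqp.one_lt.le
          have hlogq : 0 ≤ Real.log q := Real.log_nonneg hq1
          have hnq : (n:ℝ) ≤ 2 * q := by
            have : n ≤ 2 * q := by omega
            exact_mod_cast this
          rw [div_le_iff₀ (by positivity)]
          have hn0 : (0:ℝ) < (n:ℝ) := by positivity
          rw [div_mul_eq_mul_div, div_mul_eq_mul_div, le_div_iff₀ hn0]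
          nlinarith
        calc ∑ q ∈ (Nat.primesBelow (n + 1)).filter (fun q => ¬ q < h + 1),
              Real.log q / q
            ≤ ∑ q ∈ (Nat.primesBelow (n + 1)).filter (fun q => ¬ q < h + 1),
              2 / n * Real.log q := Finset.sum_le_sum hstep
          _ ≤ ∑ q ∈ Nat.primesBelow (n + 1), 2 / n * Real.log q := by
              apply Finset.sum_le_sum_of_subset_of_nonneg (Finset.filter_subset _ _)
              intro q hq _
              have hqp := (Nat.mem_primesBelow.mp hq).2
              have hq1 : (1:ℝ) ≤ q := by exact_mod_cast hqp.one_lt.le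
              have := Real.log_nonneg hq1
              positivity
          _ = 2 / n * ∑ q ∈ Nat.primesBelow (n + 1), Real.log q := by
              rw [Finset.mul_sum]
          _ ≤ 2 / n * (n * Real.log 4) := by
              apply mul_le_mul_of_nonneg_left (log_primorial_le n) (by positivity)
          _ = 2 * Real.log 4 := by
              have hn0 : (n:ℝ) ≠ 0 := by positivity
              field_simp
      have hih := ih h hhn
      have hlogstep : A * Real.log h + 2 * Real.log 4 ≤ A * Real.log n := by
        have hA2 : A * Real.log 2 = 2 * Real.log 4 := by
          rw [hA]; field_simp
        have : Real.log (2 * h) ≤ Real.log n := by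
          apply Real.log_le_log (by positivity)
          exact_mod_cast h2h
        rw [Real.log_mul (by norm_num)
          (by exact_mod_cast Nat.one_le_iff_ne_zero.mp hh1 : (h:ℝ) ≠ 0)] at this
        nlinarith [mul_le_mul_of_nonneg_left this hApos]
      calc ∑ q ∈ Nat.primesBelow (n + 1), Real.log q / q
          = ∑ q ∈ Nat.primesBelow (h + 1), Real.log q / q
            + ∑ q ∈ (Nat.primesBelow (n + 1)).filter (fun q => ¬ q < h + 1),
              Real.log q / q := by rw [← hsplit, hfilt]
        _ ≤ (A * Real.log h + 2 * Real.log 4) + 2 * Real.log 4 := by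
            apply add_le_add hih hsecond
        _ ≤ A * Real.log n + 2 * Real.log 4 := by linarith

lemma norm_prime_pow (K : Type*) [Field K] [NumberField K]
    (P : Ideal (𝓞 K)) (hP : P.IsPrime) (hP0 : P ≠ ⊥) :
    ∃ q f : ℕ, q.Prime ∧ 0 < f ∧ Ideal.absNorm P = q ^ f ∧ ((q : ℕ) : 𝓞 K) ∈ P := by
  haveI hmax : P.IsMaximal := hP.isMaximal hP0
  haveI : Finite (𝓞 K ⧸ P) := by
    rw [← Ideal.absNorm_ne_zero_iff]
    simp [Ideal.absNorm_eq_zero_iff, hP0]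
  letI : Field (𝓞 K ⧸ P) := Ideal.Quotient.field P
  letI : Fintype (𝓞 K ⧸ P) := Fintype.ofFinite _
  obtain ⟨q, _, f, hq, hcard⟩ := FiniteField.card' (K := 𝓞 K ⧸ P)
  have hnorm : Ideal.absNorm P = q ^ (f : ℕ) := by
    rw [Ideal.absNorm_apply, Submodule.cardQuot_apply, Nat.card_eq_fintype_card, hcard]
  refine ⟨q, f, hq, f.pos, hnorm, ?_⟩
  have := Ideal.absNorm_mem P
  rw [hnorm] at this
  push_cast at this
  exact hP.mem_of_pow_mem _ this

lemma card_primes_over_le (K : Type*) [Field K] [NumberField K]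
    (q : ℕ) (hq : q.Prime) (s : Finset (Ideal (𝓞 K)))
    (hs : ∀ P ∈ s, P.IsPrime ∧ P ≠ ⊥ ∧ ((q : ℕ) : 𝓞 K) ∈ P ∧ q ≤ Ideal.absNorm P) :
    s.card ≤ Module.finrank ℤ (𝓞 K) := by
  set d := Module.finrank ℤ (𝓞 K) with hd
  have hq0 : (0:ℕ) < q := hq.pos
  have hdvd : (∏ P ∈ s, P) ∣ Ideal.span {((q : ℕ) : 𝓞 K)} := by
    apply Finset.prod_dvd_of_coprime
    · intro P hP Q hQ hne
      have := Ideal.IsMaximal.coprime_of_ne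
        ((hs P hP).1.isMaximal (hs P hP).2.1)
        ((hs Q hQ).1.isMaximal (hs Q hQ).2.1) hne
      simpa [Function.onFun, Ideal.isCoprime_iff_sup_eq] using this
    · intro P hP
      rw [Ideal.dvd_iff_le, Ideal.span_le]
      simpa using (hs P hP).2.2.1
  have hnormspan : Ideal.absNorm (Ideal.span {((q : ℕ) : 𝓞 K)}) = q ^ d := by
    rw [Ideal.absNorm_span_singleton]
    have hcast : ((q : ℕ) : 𝓞 K) = algebraMap ℤ (𝓞 K) (q : ℤ) := by push_cast; rfl
    rw [hcast, Algebra.norm_algebraMap_of_basis (Module.Free.chooseBasis ℤ (𝓞 K))]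
    rw [← Module.finrank_eq_card_chooseBasisIndex]
    exact Int.natAbs_pow _ _
  have h1 : (∏ P ∈ s, Ideal.absNorm P) ∣ q ^ d := by
    rw [← hnormspan, ← map_prod Ideal.absNorm]
    exact Ideal.absNorm_dvd_absNorm_of_le (Ideal.dvd_iff_le.mp hdvd)
  have h2 : q ^ s.card ≤ ∏ P ∈ s, Ideal.absNorm P := by
    rw [← Finset.prod_const]
    exact Finset.prod_le_prod' fun P hP => (hs P hP).2.2.2
  have h3 : q ^ s.card ≤ q ^ d :=
    h2.trans (Nat.le_of_dvd (pow_pos hq0 d) h1)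
  exact (Nat.pow_le_pow_iff_right hq.one_lt).mp h3

lemma log_div_self_pow_le (q f : ℕ) (hq : q.Prime) (hf : 0 < f) :
    Real.log ((q ^ f : ℕ) : ℝ) / ((q ^ f : ℕ) : ℝ) ≤ Real.log q / q := by
  have hq2 : (2:ℝ) ≤ q := by exact_mod_cast hq.two_le
  have hfq : (f:ℝ) * q ≤ (q:ℝ) ^ f := by
    have h1 : f ≤ 2 ^ (f - 1) := by
      have := Nat.lt_two_pow_self (n := f - 1)
      omega
    have hnat : f * q ≤ q ^ f := by
      calc f * q ≤ q ^ (f - 1) * q :=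
            Nat.mul_le_mul_right _ (h1.trans (Nat.pow_le_pow_left hq.two_le _))
        _ = q ^ f := by
            rw [← pow_succ]
            congr 1
            omega
    exact_mod_cast hnat
  have hlogq : 0 ≤ Real.log q := Real.log_nonneg (by linarith)
  push_cast
  rw [Real.log_pow]
  rw [div_le_div_iff₀ (by positivity) (by positivity)]
  calc (f:ℝ) * Real.log q * q = Real.log q * ((f:ℝ) * q) := by ring
    _ ≤ Real.log q * (q:ℝ) ^ f := mul_le_mul_of_nonneg_left hfq hlogq
    _ = Real.log q * q ^ f := rfl

lemma sum_log_div_le (K : Type*) [Field K] [NumberField K]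
    (S : Finset (Ideal (𝓞 K))) (hmem : ∀ P ∈ S, P.IsPrime ∧ P ≠ ⊥) (T : ℝ)
    (hT : T = ∑ P ∈ S, Real.log (Ideal.absNorm P)) :
    ∑ P ∈ S, Real.log (Ideal.absNorm P) / (Ideal.absNorm P : ℝ)
      ≤ (Module.finrank ℤ (𝓞 K) : ℝ) *
          ((2 * Real.log 4 / Real.log 2) * Real.log ⌊T⌋₊ + 2 * Real.log 4) + 1 := by
  classical
  have hlog2 : (0:ℝ) < Real.log 2 := Real.log_pos (by norm_num)
  have hN2 : ∀ P ∈ S, 2 ≤ Ideal.absNorm P := by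
    intro P hP
    obtain ⟨hp, hb⟩ := hmem P hP
    have h0 : Ideal.absNorm P ≠ 0 := by simp [Ideal.absNorm_eq_zero_iff, hb]
    have h1 : Ideal.absNorm P ≠ 1 := by
      intro h1
      exact hp.ne_top (Ideal.absNorm_eq_one_iff.mp h1)
    omega
  have hT0 : 0 ≤ T := hT ▸ Finset.sum_nonneg fun P _ => Real.log_natCast_nonneg _
  set S₁ := S.filter (fun P => (Ideal.absNorm P : ℝ) ≤ T) with hS₁
  set S₂ := S.filter (fun P => ¬ (Ideal.absNorm P : ℝ) ≤ T) with hS₂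
  have hsplit : ∑ P ∈ S, Real.log (Ideal.absNorm P) / (Ideal.absNorm P : ℝ)
      = ∑ P ∈ S₁, Real.log (Ideal.absNorm P) / (Ideal.absNorm P : ℝ)
        + ∑ P ∈ S₂, Real.log (Ideal.absNorm P) / (Ideal.absNorm P : ℝ) :=
    (Finset.sum_filter_add_sum_filter_not S _ _).symm
  -- bound for S₂
  have hS₂bound : ∑ P ∈ S₂, Real.log (Ideal.absNorm P) / (Ideal.absNorm P : ℝ) ≤ 1 := by
    rcases Finset.eq_empty_or_nonempty S₂ with he | ⟨P₀, hP₀⟩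
    · simp [he]
    · have hP₀S : P₀ ∈ S := (Finset.mem_filter.mp hP₀).1
      have hTpos : 0 < T := by
        have h1 : Real.log 2 ≤ Real.log (Ideal.absNorm P₀) := by
          apply Real.log_le_log (by norm_num)
          exact_mod_cast hN2 P₀ hP₀S
        have h2 : Real.log (Ideal.absNorm P₀) ≤ T := by
          rw [hT]
          exact Finset.single_le_sum
            (fun P _ => Real.log_natCast_nonneg (Ideal.absNorm P)) hP₀S
        linarith
      calc ∑ P ∈ S₂, Real.log (Ideal.absNorm P) / (Ideal.absNorm P : ℝ)
          ≤ ∑ P ∈ S₂, Real.log (Ideal.absNorm P) / T := by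
            apply Finset.sum_le_sum
            intro P hP
            have hlt : T ≤ (Ideal.absNorm P : ℝ) :=
              (lt_of_not_ge (Finset.mem_filter.mp hP).2).le
            gcongr
        _ = (∑ P ∈ S₂, Real.log (Ideal.absNorm P)) / T := by rw [Finset.sum_div]
        _ ≤ T / T := by
            gcongr
            rw [hT]
            apply Finset.sum_le_sum_of_subset_of_nonneg (Finset.filter_subset _ _)
            intro P _ _
            exact Real.log_natCast_nonneg _
        _ = 1 := div_self hTpos.ne'
  -- bound for S₁
  set d : ℕ := Module.finrank ℤ (𝓞 K) with hd
  set n : ℕ := ⌊T⌋₊ with hn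
  set g : Ideal (𝓞 K) → ℕ := fun P => (Ideal.absNorm P).minFac with hg
  have hgfact : ∀ P ∈ S₁, ∃ f : ℕ, 0 < f ∧ (g P).Prime ∧ Ideal.absNorm P = (g P) ^ f
      ∧ ((g P : ℕ) : 𝓞 K) ∈ P := by
    intro P hP
    have hPS : P ∈ S := (Finset.mem_filter.mp hP).1
    obtain ⟨hp, hb⟩ := hmem P hPS
    obtain ⟨q, f, hq, hf, hnorm, hmemq⟩ := norm_prime_pow K P hp hb
    have hgq : g P = q := by
      rw [hg]
      simp only
      rw [hnorm, hq.pow_minFac hf.ne']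
    rw [hgq]
    exact ⟨f, hf, hq, hnorm, hmemq⟩
  have hS₁bound : ∑ P ∈ S₁, Real.log (Ideal.absNorm P) / (Ideal.absNorm P : ℝ)
      ≤ (d : ℝ) * ((2 * Real.log 4 / Real.log 2) * Real.log n + 2 * Real.log 4) := by
    calc ∑ P ∈ S₁, Real.log (Ideal.absNorm P) / (Ideal.absNorm P : ℝ)
        ≤ ∑ P ∈ S₁, Real.log (g P) / (g P : ℝ) := by
          apply Finset.sum_le_sum
          intro P hP
          obtain ⟨f, hf, hq, hnorm, _⟩ := hgfact P hP
          rw [hnorm]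
          exact log_div_self_pow_le (g P) f hq hf
      _ = ∑ q ∈ S₁.image g, (S₁.filter fun P => g P = q).card • (Real.log q / q) :=
          Finset.sum_comp (fun q : ℕ => Real.log q / q) g
      _ ≤ ∑ q ∈ S₁.image g, (d : ℝ) * (Real.log q / q) := by
          apply Finset.sum_le_sum
          intro q hqim
          obtain ⟨P₁, hP₁, hgP₁⟩ := Finset.mem_image.mp hqim
          obtain ⟨f₁, hf₁, hq₁, _, _⟩ := hgfact P₁ hP₁
          rw [hgP₁] at hq₁
          have hcard : (S₁.filter fun P => g P = q).card ≤ d := by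
            apply card_primes_over_le K q hq₁
            intro P hP
            obtain ⟨hPS₁, hgPq⟩ := Finset.mem_filter.mp hP
            have hPS : P ∈ S := (Finset.mem_filter.mp hPS₁).1
            obtain ⟨hp, hb⟩ := hmem P hPS
            obtain ⟨f, hf, hqP, hnorm, hmemq⟩ := hgfact P hPS₁
            rw [hgPq] at hnorm hmemq
            refine ⟨hp, hb, hmemq, ?_⟩
            rw [hnorm]
            exact Nat.le_self_pow hf.ne' q
          rw [nsmul_eq_mul]
          apply mul_le_mul_of_nonneg_right
          · exact_mod_cast hcard
          · have h1 : (1:ℝ) ≤ q := by exact_mod_cast hq₁.one_lt.le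
            have := Real.log_nonneg h1
            positivity
      _ = (d : ℝ) * ∑ q ∈ S₁.image g, Real.log q / q := by rw [Finset.mul_sum]
      _ ≤ (d : ℝ) * ∑ q ∈ Nat.primesBelow (n + 1), Real.log q / q := by
          apply mul_le_mul_of_nonneg_left _ (by positivity)
          apply Finset.sum_le_sum_of_subset_of_nonneg
          · intro q hqim
            obtain ⟨P₁, hP₁, hgP₁⟩ := Finset.mem_image.mp hqim
            obtain ⟨f₁, hf₁, hq₁, hnorm₁, _⟩ := hgfact P₁ hP₁
            rw [hgP₁] at hq₁ hnorm₁
            have hqle : q ≤ Ideal.absNorm P₁ := by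
              rw [hnorm₁]
              exact Nat.le_self_pow hf₁.ne' q
            have hPT : (Ideal.absNorm P₁ : ℝ) ≤ T := (Finset.mem_filter.mp hP₁).2
            have hqT : (q : ℝ) ≤ T := le_trans (by exact_mod_cast hqle) hPT
            have hqn : q ≤ n := Nat.le_floor hqT
            exact Nat.mem_primesBelow.mpr ⟨by omega, hq₁⟩
          · intro q hq _
            have hqp := (Nat.mem_primesBelow.mp hq).2
            have h1 : (1:ℝ) ≤ q := by exact_mod_cast hqp.one_lt.le
            have := Real.log_nonneg h1
            positivity
      _ ≤ (d : ℝ) * ((2 * Real.log 4 / Real.log 2) * Real.log n + 2 * Real.log 4) := by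
          apply mul_le_mul_of_nonneg_left (mertens_bound n) (by positivity)
  rw [hsplit]
  have := add_le_add hS₁bound hS₂bound
  linarith

theorem stmt_11 (K : Type*) [Field K] [NumberField K]
    (m : Ideal (𝓞 K) → ℕ)
    (hfin : ∀ M : ℕ,
      {p : Ideal (𝓞 K) | p.IsPrime ∧ p ≠ ⊥ ∧ m p ≤ M}.Finite)
    (C : ℝ)
    (hD : ∀ M : ℕ, 2 ≤ M →
      Real.log (Real.log (Ideal.absNorm (∏ p ∈ (hfin M).toFinset, p)))
        ≤ C * Real.log M) :
    ∃ C' C'' : ℝ, ∀ M : ℕ, 2 ≤ M →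
      ∑ p ∈ (hfin M).toFinset,
          Real.log (Ideal.absNorm p) / (Ideal.absNorm p : ℝ)
        ≤ C' * Real.log M + C'' := by
  refine ⟨(Module.finrank ℤ (𝓞 K) : ℝ) * (2 * Real.log 4 / Real.log 2) * max C 0,
          (Module.finrank ℤ (𝓞 K) : ℝ) * (2 * Real.log 4) + 1, ?_⟩
  intro M hM
  have hlog2 : (0:ℝ) < Real.log 2 := Real.log_pos (by norm_num)
  have hlog4 : (0:ℝ) ≤ Real.log 4 := Real.log_nonneg (by norm_num)
  have hmem : ∀ P ∈ (hfin M).toFinset, P.IsPrime ∧ P ≠ ⊥ := by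
    intro P hP
    rw [Set.Finite.mem_toFinset] at hP
    exact ⟨hP.1, hP.2.1⟩
  have hkey := sum_log_div_le K (hfin M).toFinset hmem _ rfl
  have hT_eq : Real.log ((Ideal.absNorm (∏ p ∈ (hfin M).toFinset, p) : ℕ) : ℝ)
      = ∑ P ∈ (hfin M).toFinset, Real.log (Ideal.absNorm P) := by
    rw [map_prod Ideal.absNorm]
    push_cast
    rw [Real.log_prod]
    intro P hP
    have h0 : Ideal.absNorm P ≠ 0 := by
      simp [Ideal.absNorm_eq_zero_iff, (hmem P hP).2]
    exact_mod_cast h0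
  have hDT : Real.log (∑ P ∈ (hfin M).toFinset, Real.log (Ideal.absNorm P))
      ≤ C * Real.log M := by
    rw [← hT_eq]
    exact hD M hM
  have hT0 : 0 ≤ ∑ P ∈ (hfin M).toFinset, Real.log (Ideal.absNorm P) :=
    Finset.sum_nonneg fun P _ => Real.log_natCast_nonneg _
  have hlogM : 0 ≤ Real.log M := Real.log_natCast_nonneg M
  have hlogn : Real.log (⌊∑ P ∈ (hfin M).toFinset, Real.log (Ideal.absNorm P)⌋₊ : ℕ)
      ≤ max C 0 * Real.log M := by
    rcases Nat.eq_zero_or_pos ⌊∑ P ∈ (hfin M).toFinset, Real.log (Ideal.absNorm P)⌋₊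
      with h0 | hpos
    · rw [h0]
      simp only [Nat.cast_zero, Real.log_zero]
      positivity
    · calc Real.log (⌊∑ P ∈ (hfin M).toFinset, Real.log (Ideal.absNorm P)⌋₊ : ℕ)
          ≤ Real.log (∑ P ∈ (hfin M).toFinset, Real.log (Ideal.absNorm P)) :=
            Real.log_le_log (by exact_mod_cast hpos) (Nat.floor_le hT0)
        _ ≤ C * Real.log M := hDT
        _ ≤ max C 0 * Real.log M :=
            mul_le_mul_of_nonneg_right (le_max_left _ _) hlogM
  have hd0 : (0:ℝ) ≤ (Module.finrank ℤ (𝓞 K) : ℝ) := Nat.cast_nonneg _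
  have hA0 : (0:ℝ) ≤ 2 * Real.log 4 / Real.log 2 := by positivity
  have hdA0 : (0:ℝ) ≤ (Module.finrank ℤ (𝓞 K) : ℝ) * (2 * Real.log 4 / Real.log 2) :=
    mul_nonneg hd0 hA0
  have hmul := mul_le_mul_of_nonneg_left hlogn hdA0
  calc ∑ p ∈ (hfin M).toFinset,
        Real.log (Ideal.absNorm p) / (Ideal.absNorm p : ℝ)
      ≤ (Module.finrank ℤ (𝓞 K) : ℝ) *
          ((2 * Real.log 4 / Real.log 2) *
            Real.log (⌊∑ P ∈ (hfin M).toFinset, Real.log (Ideal.absNorm P)⌋₊ : ℕ)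
          + 2 * Real.log 4) + 1 := hkey
    _ ≤ (Module.finrank ℤ (𝓞 K) : ℝ) * (2 * Real.log 4 / Real.log 2) * max C 0 * Real.log M
        + ((Module.finrank ℤ (𝓞 K) : ℝ) * (2 * Real.log 4) + 1) := by nlinarith [hmul]
end

section
/- Let Σ ⊂ X × X be a finite set, h : X → ℝ a function, and f₁, f₂ : X → X maps such that for all P, Q ∈ X: (i) P ≠ Q and f₁(P) = f₁(Q) implies (P,Q) ∈ Σ; (ii) P ≠ Q and f₂(P) = f₂(Q) implies (P,Q) ∈ Σ; (iii) f₁(P) = f₂(Q) implies (P,Q) ∈ Σ. Let C bound the h-values of all coordinates of points of Σ, and suppose h(g(x)) ≥ h(x) for all g in the semigroup M generated by {f₁, f₂} whenever h(x) > C, and that no x with h(x) > C satisfies F(x) = x for a nontrivial F ∈ M. Then every x with h(x) > C is strongly wandering: the map M → X, F ↦ F(x), is injective (M being the free semigroup on two letters acting via f₁, f₂). -/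
theorem stmt_16 (X : Type*) (h : X → ℝ) (f : Fin 2 → X → X)
    (Sig : Set (X × X)) (hSigfin : Sig.Finite)
    (hi : ∀ P Q : X, P ≠ Q → f 0 P = f 0 Q → (P, Q) ∈ Sig)
    (hii : ∀ P Q : X, P ≠ Q → f 1 P = f 1 Q → (P, Q) ∈ Sig)
    (hiii : ∀ P Q : X, f 0 P = f 1 Q → (P, Q) ∈ Sig)
    (C : ℝ)
    (hC : ∀ z ∈ Sig, h z.1 ≤ C ∧ h z.2 ≤ C)
    (act : FreeMonoid (Fin 2) →* Function.End X)
    (hact : ∀ i : Fin 2, act (FreeMonoid.of i) = f i)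
    (hmono : ∀ x : X, C < h x → ∀ w : FreeMonoid (Fin 2), h x ≤ h (act w x))
    (hnofix : ∀ x : X, C < h x → ∀ w : FreeMonoid (Fin 2), w ≠ 1 → act w x ≠ x) :
    ∀ x : X, C < h x →
      Function.Injective (fun w : FreeMonoid (Fin 2) => act w x) := by
  intro x hx
  -- key: no point of height > C appears as a coordinate of Sig
  have hnot : ∀ P Q : X, C < h P → (P, Q) ∉ Sig := by
    intro P Q hP hmem
    exact absurd (hC _ hmem).1 (not_le.mpr hP)
  have hnot' : ∀ P Q : X, C < h Q → (P, Q) ∉ Sig := by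
    intro P Q hQ hmem
    exact absurd (hC _ hmem).2 (not_le.mpr hQ)
  have key : ∀ (l m : List (Fin 2)),
      act (FreeMonoid.ofList l) x = act (FreeMonoid.ofList m) x → l = m := by
    intro l
    induction l with
    | nil =>
      intro m hm
      cases m with
      | nil => rfl
      | cons j m' =>
        exfalso
        apply hnofix x hx (FreeMonoid.ofList (j :: m'))
        · intro hone
          have := congrArg FreeMonoid.toList hone
          simp at this
        · have h' := hm.symm
          simp at h' ⊢
          exact h'
    | cons i l' ih =>
      intro m hm
      cases m with
      | nil =>
        exfalso
        apply hnofix x hx (FreeMonoid.ofList (i :: l'))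
        · intro hone
          have := congrArg FreeMonoid.toList hone
          simp at this
        · have h' := hm
          simp at h' ⊢
          exact h'
      | cons j m' =>
        set P := act (FreeMonoid.ofList l') x with hP
        set Q := act (FreeMonoid.ofList m') x with hQ
        have hPC : C < h P := lt_of_lt_of_le hx (hmono x hx _)
        have hQC : C < h Q := lt_of_lt_of_le hx (hmono x hx _)
        have heq : f i P = f j Q := by
          have h1 : FreeMonoid.ofList (i :: l') = FreeMonoid.of i * FreeMonoid.ofList l' := rfl
          have h2 : FreeMonoid.ofList (j :: m') = FreeMonoid.of j * FreeMonoid.ofList m' := rfl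
          rw [h1, h2, map_mul, map_mul] at hm
          have : f i (act (FreeMonoid.ofList l') x) = f j (act (FreeMonoid.ofList m') x) := by
            have := hm
            simp [hact, Function.End.mul_def] at this
            exact this
          exact this
        fin_cases i <;> fin_cases j
        · rcases eq_or_ne P Q with hpq | hpq
          · rw [ih m' hpq]
          · exact absurd (hi P Q hpq heq) (hnot P Q hPC)
        · exact absurd (hiii P Q heq) (hnot P Q hPC)
        · exact absurd (hiii Q P heq.symm) (hnot Q P hQC)
        · rcases eq_or_ne P Q with hpq | hpq
          · rw [ih m' hpq]
          · exact absurd (hii P Q hpq heq) (hnot P Q hPC)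
  intro w v hwv
  have := key w.toList v.toList (by simpa using hwv)
  exact FreeMonoid.toList.injective this
end
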